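/- Let m, n ≥ 1 be integers and H ∈ C^m(ℝ^n) with ‖H‖_{L^∞(ℝ^n)} < ∞ and sup_{ω ∈ S^{n−1}} ‖(ω·∇)^m H‖_{L^∞(ℝ^n)} < ∞. Then there is a constant L_{m,n}, depending only on m, n, ‖H‖_{L^∞} and the directional derivative bound, such that for every x ∈ ℝ^n, |H(x)| ≤ L_{m,n} ( ∫_{Q_x} |H(ξ)|² dξ )^{m/(2m+n)}, where Q_x is the axis-parallel cube of side length 2 with corner x, oriented away from x in the sense that x·(ξ−x) ≥ 0 for all ξ ∈ Q_x. -/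

import Mathlib

open MeasureTheory Finset
open scoped fwdDiff

section Aux

variable {E : Type*} [NormedAddCommGroup E] [NormedSpace ℝ E]

private lemma itfd_shift (v : E) : ∀ (j : ℕ) (f : E → ℂ), ContDiff ℝ (j : ℕ∞) f → ∀ y : E,
    iteratedFDeriv ℝ j (fun z => f (z + v)) y = iteratedFDeriv ℝ j f (y + v) := by
  intro j
  induction j with
  | zero => intro f hf y; ext m; simp
  | succ j ih =>
    intro f hf y
    have hshift : iteratedFDeriv ℝ j (fun z => f (z + v)) = fun y => iteratedFDeriv ℝ j f (y + v) :=
      funext fun y => ih f (hf.of_le (by exact_mod_cast Nat.le_succ j)) y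
    ext m
    rw [iteratedFDeriv_succ_apply_left, iteratedFDeriv_succ_apply_left, hshift]
    have hdiff : DifferentiableAt ℝ (iteratedFDeriv ℝ j f) (y + v) :=
      (hf.differentiable_iteratedFDeriv (by exact_mod_cast Nat.lt_succ_self j)).differentiableAt
    have h1 : HasFDerivAt (fun z : E => iteratedFDeriv ℝ j f (z + v))
        (fderiv ℝ (iteratedFDeriv ℝ j f) (y + v)) y := by
      have h := hdiff.hasFDerivAt.comp y ((hasFDerivAt_id y).add_const v)
      simp at h; exact h
    rw [h1.fderiv]

private lemma diag_fd_bound (v : E) : ∀ (j : ℕ) (f : E → ℂ), ContDiff ℝ (j : ℕ∞) f → ∀ C : ℝ,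
    (∀ y, ‖iteratedFDeriv ℝ j f y (fun _ => v)‖ ≤ C) → ∀ x, ‖(fwdDiff v)^[j] f x‖ ≤ C := by
  intro j
  induction j with
  | zero => intro f hf C hC x; simpa using hC x
  | succ j ih =>
    intro f hf C hC x
    rw [Function.iterate_succ_apply]
    have hfj : ContDiff ℝ (j : ℕ∞) f := hf.of_le (by exact_mod_cast Nat.le_succ j)
    have hg : ContDiff ℝ (j : ℕ∞) fun z : E => f (z + v) :=
      hfj.comp (contDiff_id.add contDiff_const)
    have hf' : ContDiff ℝ (j : ℕ∞) (fwdDiff v f) := hg.sub hfj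
    refine ih (fwdDiff v f) hf' C (fun y => ?_) x
    have hsplit : fwdDiff v f = (fun z : E => f (z + v)) + fun z => -(f z) := by
      funext z
      simp [fwdDiff, sub_eq_add_neg]
    have hsub : iteratedFDeriv ℝ j (fwdDiff v f) y (fun _ => v)
        = iteratedFDeriv ℝ j f (y + v) (fun _ => v) - iteratedFDeriv ℝ j f y (fun _ => v) := by
      rw [hsplit, iteratedFDeriv_add_apply hg.contDiffAt hfj.neg.contDiffAt,
        show (fun x => -f x) = -f from rfl, iteratedFDeriv_neg_apply,
        itfd_shift v j f hfj y]
      simp [sub_eq_add_neg]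
    rw [hsub]
    set w : Fin j → E := fun _ => v with hw
    have key : ∀ t : ℝ, HasDerivAt (fun t : ℝ => iteratedFDeriv ℝ j f (y + t • v) w)
        (iteratedFDeriv ℝ (j + 1) f (y + t • v) (fun _ => v)) t := by
      intro t
      have hdiff := hf.differentiable_iteratedFDeriv (m := j) (by exact_mod_cast Nat.lt_succ_self j)
      have hc : HasDerivAt (fun t : ℝ => y + t • v) v t := by
        simpa using ((hasDerivAt_id t).smul_const v).const_add y
      have h2 : HasDerivAt (fun t : ℝ => iteratedFDeriv ℝ j f (y + t • v))
          (fderiv ℝ (iteratedFDeriv ℝ j f) (y + t • v) v) t :=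
        (hdiff (y + t • v)).hasFDerivAt.comp_hasDerivAt t hc
      have h3 := ((ContinuousMultilinearMap.apply ℝ (fun _ : Fin j => E) ℂ
        w).hasFDerivAt).comp_hasDerivAt t h2
      have e : iteratedFDeriv ℝ (j + 1) f (y + t • v) (fun _ => v) = ContinuousMultilinearMap.apply ℝ (fun _ : Fin j => E) ℂ w (fderiv ℝ (iteratedFDeriv ℝ j f) (y + t • v) v) := by
        rw [iteratedFDeriv_succ_apply_left]; rfl
      rw [e]; exact h3
    have hmvt := norm_image_sub_le_of_norm_deriv_le_segment'
      (f := fun t : ℝ => iteratedFDeriv ℝ j f (y + t • v) w)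
      (f' := fun t : ℝ => iteratedFDeriv ℝ (j + 1) f (y + t • v) (fun _ => v))
      (fun t _ => (key t).hasDerivWithinAt)
      (fun t _ => hC (y + t • v)) 1 (by norm_num : (1 : ℝ) ∈ Set.Icc (0 : ℝ) 1)
    simpa using hmvt

private lemma box_meas {n : ℕ} (S : Fin n → Set ℝ) (hS : ∀ i, MeasurableSet (S i)) :
    MeasurableSet {ξ : EuclideanSpace ℝ (Fin n) | ∀ i, ξ i ∈ S i} ∧
    volume {ξ : EuclideanSpace ℝ (Fin n) | ∀ i, ξ i ∈ S i} = ∏ i, volume (S i) := by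
  have he : {ξ : EuclideanSpace ℝ (Fin n) | ∀ i, ξ i ∈ S i}
      = (MeasurableEquiv.toLp 2 (Fin n → ℝ)).symm ⁻¹' (Set.univ.pi S) := by
    ext ξ; simp [Set.mem_pi, MeasurableEquiv.toLp_symm_apply]
  constructor
  · rw [he]
    exact (MeasurableEquiv.toLp 2 (Fin n → ℝ)).symm.measurable (MeasurableSet.univ_pi hS)
  · rw [he, (EuclideanSpace.volume_preserving_symm_measurableEquiv_toLp (Fin n)).measure_preimage
      (MeasurableSet.univ_pi hS).nullMeasurableSet]
    exact volume_pi_pi S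

end Aux

set_option maxHeartbeats 1000000 in
/-- Pointwise bounds from local `L²` bounds in `ℝ^n`: for `H ∈ C^m(ℝ^n)` with bounded sup
norm and bounded `m`-th directional derivatives, there is a constant `L_{m,n}` such that
`|H(x)| ≤ L_{m,n} (∫_{Q_x} |H(ξ)|² dξ)^{m/(2m+n)}` where `Q_x` is the axis-parallel cube
of side length `2` with corner `x` oriented away from `x`. -/
theorem pointwise_from_local_L2_dimension_n (m n : ℕ) (hm : 1 ≤ m) (hn : 1 ≤ n)
    (H : EuclideanSpace ℝ (Fin n) → ℂ) (hH : ContDiff ℝ (m : ℕ∞) H) (M0 Mm : ℝ)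
    (hbdd : ∀ x, ‖H x‖ ≤ M0)
    (hdir : ∀ ω : EuclideanSpace ℝ (Fin n), ‖ω‖ = 1 →
      ∀ x, ‖iteratedFDeriv ℝ m H x (fun _ => ω)‖ ≤ Mm) :
    ∃ L : ℝ, ∀ x : EuclideanSpace ℝ (Fin n),
      ‖H x‖ ≤
        L * (∫ ξ in {ξ : EuclideanSpace ℝ (Fin n) |
              ∀ i, ξ i ∈ (if 0 ≤ x i then Set.Icc (x i) (x i + 2)
                else Set.Icc (x i - 2) (x i))}, ‖H ξ‖ ^ 2) ^ ((m : ℝ) / (2 * m + n)) := by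
  classical
  have i0 : Fin n := ⟨0, hn⟩
  have hcont : Continuous H := hH.continuous
  have hM0 : 0 ≤ M0 := le_trans (norm_nonneg _) (hbdd 0)
  have hMm : 0 ≤ Mm := by
    refine le_trans (norm_nonneg _) (hdir (EuclideanSpace.single i0 (1 : ℝ)) ?_ 0)
    simp
  have hmR : (0 : ℝ) < m := by exact_mod_cast hm
  have hdiag : ∀ (v : EuclideanSpace ℝ (Fin n)) (y : EuclideanSpace ℝ (Fin n)),
      ‖iteratedFDeriv ℝ m H y (fun _ => v)‖ ≤ Mm * ‖v‖ ^ m := by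
    intro v y
    rcases eq_or_ne v 0 with rfl | hv
    · have hz : iteratedFDeriv ℝ m H y (fun _ => (0 : EuclideanSpace ℝ (Fin n))) = 0 :=
        (iteratedFDeriv ℝ m H y).map_coord_zero ⟨0, hm⟩ rfl
      rw [hz, norm_zero]
      positivity
    · set ω := ‖v‖⁻¹ • v with hω
      have hω1 : ‖ω‖ = 1 := norm_smul_inv_norm hv
      have hv' : (fun _ : Fin m => v) = fun _ : Fin m => ‖v‖ • ω := by
        funext _
        rw [hω, smul_smul, mul_inv_cancel₀ (norm_ne_zero_iff.2 hv), one_smul]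
      rw [hv']
      rw [show (fun _ : Fin m => ‖v‖ • ω) = (fun i : Fin m => (fun _ : Fin m => ‖v‖) i • (fun _ : Fin m => ω) i) from rfl,
        ContinuousMultilinearMap.map_smul_univ]
      rw [norm_smul]
      simp only [prod_const, card_univ, Fintype.card_fin, norm_pow, Real.norm_eq_abs,
        abs_of_nonneg (norm_nonneg v)]
      rw [mul_comm]
      exact mul_le_mul_of_nonneg_right (hdir ω hω1 y) (by positivity)
  set K : ℝ := Mm * Real.sqrt n ^ m with hKdef
  have hK : 0 ≤ K := mul_nonneg hMm (pow_nonneg (Real.sqrt_nonneg _) _)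
  have h2m : (0 : ℝ) < 2 ^ m := by positivity
  refine ⟨K + 2 ^ m + M0 * ((m : ℝ) / 2) ^ m, fun x => ?_⟩
  set SQ : Fin n → Set ℝ := fun i =>
    if 0 ≤ x i then Set.Icc (x i) (x i + 2) else Set.Icc (x i - 2) (x i) with hSQ
  set Q : Set (EuclideanSpace ℝ (Fin n)) := {ξ | ∀ i, ξ i ∈ SQ i} with hQdef
  set I : ℝ := ∫ ξ in Q, ‖H ξ‖ ^ 2 with hIdef
  have hSQm : ∀ i, MeasurableSet (SQ i) := by
    intro i; rw [hSQ]; dsimp only; split <;> exact measurableSet_Icc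
  obtain ⟨hQm, hQvol⟩ := box_meas SQ hSQm
  have hQvol' : volume Q = ENNReal.ofReal 2 ^ n := by
    have h2 : ∀ i : Fin n, volume (SQ i) = ENNReal.ofReal 2 := by
      intro i
      rw [hSQ]; dsimp only; split <;> rw [Real.volume_Icc] <;> ring_nf
    calc volume Q = ∏ i : Fin n, volume (SQ i) := hQvol
      _ = ENNReal.ofReal 2 ^ n := by simp [h2]
  have hInonneg : 0 ≤ I := integral_nonneg fun ξ => sq_nonneg _
  have hIntQ : IntegrableOn (fun ξ => ‖H ξ‖ ^ 2) Q volume := by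
    refine Measure.integrableOn_of_bounded (M := M0 ^ 2) ?_ ?_ ?_
    · rw [hQvol']; exact (ENNReal.pow_ne_top ENNReal.ofReal_ne_top)
    · exact ((hcont.norm.pow 2)).aestronglyMeasurable
    · filter_upwards with ξ
      rw [Real.norm_eq_abs, abs_of_nonneg (sq_nonneg _)]
      exact pow_le_pow_left₀ (norm_nonneg _) (hbdd ξ) 2
  set gQ : EuclideanSpace ℝ (Fin n) → ℝ := Q.indicator (fun ξ => ‖H ξ‖ ^ 2) with hgQdef
  have hgQint : Integrable gQ := (integrable_indicator_iff hQm).2 hIntQ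
  have hgQeq : ∫ w, gQ w = I := by rw [hgQdef, integral_indicator hQm]
  have hgQ0 : ∀ w, 0 ≤ gQ w := fun w => Set.indicator_nonneg (fun ξ _ => sq_nonneg _) w
  -- the key quantitative estimate
  have key0 : ∀ δ : ℝ, 0 < δ → (m : ℝ) * δ ≤ 2 → ∀ s : ℝ, 0 < s →
      ‖H x‖ * δ ^ n ≤ (K * δ ^ m + 2 ^ m * (s / 2)) * δ ^ n + 1 / (2 * s) * (2 ^ m * I) := by
    intro δ hδ hmδ s hs
    set SV : Fin n → Set ℝ := fun i =>
      if 0 ≤ x i then Set.Icc (0 : ℝ) δ else Set.Icc (-δ) 0 with hSV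
    set V : Set (EuclideanSpace ℝ (Fin n)) := {v | ∀ i, v i ∈ SV i} with hVdef
    have hSVm : ∀ i, MeasurableSet (SV i) := by
      intro i; rw [hSV]; dsimp only; split <;> exact measurableSet_Icc
    obtain ⟨hVm, hVvol⟩ := box_meas SV hSVm
    have hVvol' : volume V = ENNReal.ofReal δ ^ n := by
      have h2 : ∀ i : Fin n, volume (SV i) = ENNReal.ofReal δ := by
        intro i
        rw [hSV]; dsimp only; split <;> rw [Real.volume_Icc] <;> ring_nf
      calc volume V = ∏ i : Fin n, volume (SV i) := hVvol
        _ = ENNReal.ofReal δ ^ n := by simp [h2]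
    have hVfin : volume V ≠ ⊤ := by
      rw [hVvol']; exact ENNReal.pow_ne_top ENNReal.ofReal_ne_top
    have hVtoReal : (volume V).toReal = δ ^ n := by
      rw [hVvol', ENNReal.toReal_pow, ENNReal.toReal_ofReal hδ.le]
    -- coordinates of points in V
    have hVcoord : ∀ v ∈ V, ∀ i, |v i| ≤ δ := by
      intro v hv i
      have h := hv i
      rw [hSV] at h
      dsimp only at h
      split at h <;> rw [abs_le] <;> constructor <;> simp at h <;> linarith [h.1, h.2]
    have hnv : ∀ v ∈ V, ‖v‖ ≤ Real.sqrt n * δ := by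
      intro v hv
      rw [EuclideanSpace.norm_eq]
      have h1 : ∑ i, ‖v i‖ ^ 2 ≤ (n : ℝ) * δ ^ 2 := by
        calc ∑ i, ‖v i‖ ^ 2 ≤ ∑ _i : Fin n, δ ^ 2 := by
              refine sum_le_sum fun i _ => ?_
              rw [Real.norm_eq_abs]
              exact pow_le_pow_left₀ (abs_nonneg _) (hVcoord v hv i) 2
          _ = (n : ℝ) * δ ^ 2 := by simp [mul_comm]
      calc Real.sqrt (∑ i, ‖v i‖ ^ 2) ≤ Real.sqrt ((n : ℝ) * δ ^ 2) := Real.sqrt_le_sqrt h1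
        _ = Real.sqrt n * δ := by
            rw [Real.sqrt_mul (Nat.cast_nonneg n), Real.sqrt_sq hδ.le]
    have hsub : ∀ v ∈ V, ∀ k : ℕ, k ≤ m → x + (k : ℝ) • v ∈ Q := by
      intro v hv k hk i
      have hvi := hv i
      have habs := hVcoord v hv i
      have hki : (x + (k : ℝ) • v) i = x i + (k : ℝ) * v i := by
        simp [PiLp.add_apply, PiLp.smul_apply, smul_eq_mul]
      rw [hSV] at hvi
      show (x + (k : ℝ) • v) i ∈ SQ i
      rw [hSQ, hki]
      have hk' : (k : ℝ) ≤ m := by exact_mod_cast hk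
      have hk0 : (0 : ℝ) ≤ k := Nat.cast_nonneg k
      dsimp only at hvi ⊢
      split at hvi <;> simp only [Set.mem_Icc] at hvi ⊢
      · rw [if_pos (by assumption)]
        simp only [Set.mem_Icc]
        constructor
        · nlinarith [hvi.1]
        · nlinarith [hvi.2, hvi.1]
      · rw [if_neg (by assumption)]
        simp only [Set.mem_Icc]
        constructor
        · nlinarith [hvi.1, hvi.2]
        · nlinarith [hvi.2]
    -- pointwise estimate
    have hterm : ∀ (k : ℕ) (z : ℂ), ‖((-1 : ℤ) ^ (m - k) * (m.choose k : ℤ)) • z‖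
        = (m.choose k : ℝ) * ‖z‖ := by
      intro k z
      rw [← Int.cast_smul_eq_zsmul ℝ, norm_smul, Real.norm_eq_abs]
      push_cast
      simp [abs_mul, abs_pow]
    have hchoose : ∑ k ∈ range m, (m.choose (k + 1) : ℝ) ≤ 2 ^ m := by
      have h1 : ∑ i ∈ range (m + 1), m.choose i = 2 ^ m := Nat.sum_range_choose m
      have h2 : ∑ i ∈ range (m + 1), m.choose i
          = (∑ k ∈ range m, m.choose (k + 1)) + m.choose 0 :=
        Finset.sum_range_succ' (fun i => m.choose i) m
      have h3 : (∑ k ∈ range m, m.choose (k + 1)) + 1 = 2 ^ m := by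
        rw [← h1, h2]; simp
      have h4 : ((∑ k ∈ range m, m.choose (k + 1) : ℕ) : ℝ) + 1 = 2 ^ m := by
        exact_mod_cast h3
      push_cast at h4
      linarith
    have hpoint : ∀ v ∈ V, ‖H x‖ ≤ K * δ ^ m + 2 ^ m * (s / 2)
        + 1 / (2 * s) * ∑ k ∈ range m, (m.choose (k + 1) : ℝ) * gQ (x + ((k + 1 : ℕ) : ℝ) • v) := by
      intro v hv
      -- finite difference bound
      have hΔ : ‖(fwdDiff v)^[m] H x‖ ≤ K * δ ^ m := by
        have h1 := diag_fd_bound v m H hH (Mm * ‖v‖ ^ m) (fun y => hdiag v y) x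
        refine h1.trans ?_
        have h2 : ‖v‖ ^ m ≤ (Real.sqrt n * δ) ^ m :=
          pow_le_pow_left₀ (norm_nonneg _) (hnv v hv) m
        calc Mm * ‖v‖ ^ m ≤ Mm * (Real.sqrt n * δ) ^ m :=
              mul_le_mul_of_nonneg_left h2 hMm
          _ = K * δ ^ m := by rw [hKdef, mul_pow]; ring
      have hsum := fwdDiff_iter_eq_sum_shift v H m x
      simp only [← Nat.cast_smul_eq_nsmul ℝ] at hsum
      have hsplit : ∑ k ∈ range (m + 1),
            ((-1 : ℤ) ^ (m - k) * (m.choose k : ℤ)) • H (x + ((k : ℕ) : ℝ) • v)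
          = (∑ k ∈ range m,
              ((-1 : ℤ) ^ (m - (k + 1)) * (m.choose (k + 1) : ℤ)) • H (x + (((k + 1) : ℕ) : ℝ) • v))
            + ((-1 : ℤ) ^ (m - 0) * (m.choose 0 : ℤ)) • H (x + ((0 : ℕ) : ℝ) • v) :=
        Finset.sum_range_succ'
          (fun k => ((-1 : ℤ) ^ (m - k) * (m.choose k : ℤ)) • H (x + ((k : ℕ) : ℝ) • v)) m
      have hf0 : ((-1 : ℤ) ^ (m - 0) * (m.choose 0 : ℤ)) • H (x + ((0 : ℕ) : ℝ) • v)
          = (fwdDiff v)^[m] H x - ∑ k ∈ range m,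
              ((-1 : ℤ) ^ (m - (k + 1)) * (m.choose (k + 1) : ℤ)) • H (x + (((k + 1) : ℕ) : ℝ) • v) := by
        rw [hsum, hsplit]; abel
      have hHxnorm : ‖H x‖ = ‖((-1 : ℤ) ^ (m - 0) * (m.choose 0 : ℤ)) • H (x + ((0 : ℕ) : ℝ) • v)‖ := by
        rw [hterm 0]
        simp
      have htri : ‖H x‖ ≤ ‖(fwdDiff v)^[m] H x‖
          + ∑ k ∈ range m, (m.choose (k + 1) : ℝ) * ‖H (x + (((k + 1) : ℕ) : ℝ) • v)‖ := by
        rw [hHxnorm, hf0]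
        refine (norm_sub_le _ _).trans ?_
        gcongr
        refine (norm_sum_le _ _).trans ?_
        refine le_of_eq (Finset.sum_congr rfl fun k _ => ?_)
        exact hterm (k + 1) _
      -- AM-GM on each term
      have hz : ∀ k ∈ range m, ‖H (x + (((k + 1) : ℕ) : ℝ) • v)‖
          ≤ gQ (x + (((k + 1) : ℕ) : ℝ) • v) * (1 / (2 * s)) + s / 2 := by
        intro k hk
        have hzQ : x + (((k + 1) : ℕ) : ℝ) • v ∈ Q :=
          hsub v hv (k + 1) (Nat.succ_le_of_lt (mem_range.1 hk))
        have hgz : gQ (x + (((k + 1) : ℕ) : ℝ) • v) = ‖H (x + (((k + 1) : ℕ) : ℝ) • v)‖ ^ 2 :=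
          Set.indicator_of_mem hzQ _
        rw [hgz]
        set t : ℝ := ‖H (x + (((k + 1) : ℕ) : ℝ) • v)‖ with ht
        have expand : t ^ 2 * (1 / (2 * s)) + s / 2 - t = (t - s) ^ 2 * (1 / (2 * s)) := by
          field_simp
          ring
        have hnn : 0 ≤ (t - s) ^ 2 * (1 / (2 * s)) := by positivity
        linarith
      have hsum2 : ∑ k ∈ range m, (m.choose (k + 1) : ℝ) * ‖H (x + (((k + 1) : ℕ) : ℝ) • v)‖
          ≤ 1 / (2 * s) * (∑ k ∈ range m, (m.choose (k + 1) : ℝ) * gQ (x + (((k + 1) : ℕ) : ℝ) • v))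
            + s / 2 * ∑ k ∈ range m, (m.choose (k + 1) : ℝ) := by
        have h1 : ∀ k ∈ range m, (m.choose (k + 1) : ℝ) * ‖H (x + (((k + 1) : ℕ) : ℝ) • v)‖
            ≤ 1 / (2 * s) * ((m.choose (k + 1) : ℝ) * gQ (x + (((k + 1) : ℕ) : ℝ) • v))
              + s / 2 * (m.choose (k + 1) : ℝ) := by
          intro k hk
          have h2 := hz k hk
          have hc0 : (0 : ℝ) ≤ (m.choose (k + 1) : ℝ) := Nat.cast_nonneg _
          have := mul_le_mul_of_nonneg_left h2 hc0
          calc (m.choose (k + 1) : ℝ) * ‖H (x + (((k + 1) : ℕ) : ℝ) • v)‖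
              ≤ (m.choose (k + 1) : ℝ) * (gQ (x + (((k + 1) : ℕ) : ℝ) • v) * (1 / (2 * s)) + s / 2) := this
            _ = 1 / (2 * s) * ((m.choose (k + 1) : ℝ) * gQ (x + (((k + 1) : ℕ) : ℝ) • v))
                + s / 2 * (m.choose (k + 1) : ℝ) := by ring
        calc ∑ k ∈ range m, (m.choose (k + 1) : ℝ) * ‖H (x + (((k + 1) : ℕ) : ℝ) • v)‖
            ≤ ∑ k ∈ range m, (1 / (2 * s) * ((m.choose (k + 1) : ℝ) * gQ (x + (((k + 1) : ℕ) : ℝ) • v))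
              + s / 2 * (m.choose (k + 1) : ℝ)) := Finset.sum_le_sum h1
          _ = 1 / (2 * s) * (∑ k ∈ range m, (m.choose (k + 1) : ℝ) * gQ (x + (((k + 1) : ℕ) : ℝ) • v))
              + s / 2 * ∑ k ∈ range m, (m.choose (k + 1) : ℝ) := by
              rw [Finset.sum_add_distrib, ← Finset.mul_sum, ← Finset.mul_sum]
      have hlast : s / 2 * ∑ k ∈ range m, (m.choose (k + 1) : ℝ) ≤ s / 2 * 2 ^ m :=
        mul_le_mul_of_nonneg_left hchoose (by positivity)
      have := htri.trans (by linarith [hsum2, hlast, hΔ] :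
        ‖(fwdDiff v)^[m] H x‖ + ∑ k ∈ range m, (m.choose (k + 1) : ℝ) * ‖H (x + (((k + 1) : ℕ) : ℝ) • v)‖
        ≤ K * δ ^ m + 2 ^ m * (s / 2)
          + 1 / (2 * s) * ∑ k ∈ range m, (m.choose (k + 1) : ℝ) * gQ (x + (((k + 1) : ℕ) : ℝ) • v))
      exact this
    -- integrate over V
    have hGint : ∀ k : ℕ, Integrable (fun v => gQ (x + (((k + 1) : ℕ) : ℝ) • v)) volume := by
      intro k
      have h1 : Integrable (fun w => gQ (x + w)) volume := hgQint.comp_add_left x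
      exact h1.comp_smul (R := (((k + 1) : ℕ) : ℝ)) (by exact_mod_cast Nat.succ_ne_zero k)
    have hGle : ∀ k : ℕ, ∫ v in V, gQ (x + (((k + 1) : ℕ) : ℝ) • v) ≤ I := by
      intro k
      have hc1 : (1 : ℝ) ≤ (((k + 1) : ℕ) : ℝ) := by exact_mod_cast Nat.one_le_iff_ne_zero.2 (Nat.succ_ne_zero k)
      have h1 : ∫ v in V, gQ (x + (((k + 1) : ℕ) : ℝ) • v) ≤ ∫ v, gQ (x + (((k + 1) : ℕ) : ℝ) • v) :=
        setIntegral_le_integral (hGint k) (Filter.Eventually.of_forall fun w => hgQ0 _)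
      have h2 : ∫ v, gQ (x + (((k + 1) : ℕ) : ℝ) • v)
          = |((((k + 1) : ℕ) : ℝ) ^ n)⁻¹| * ∫ w, gQ (x + w) := by
        have h := Measure.integral_comp_smul (μ := volume) (f := fun w => gQ (x + w)) (((k + 1) : ℕ) : ℝ)
        rw [finrank_euclideanSpace_fin] at h
        simpa [smul_eq_mul] using h
      have h3 : ∫ w, gQ (x + w) = I := by
        rw [integral_add_left_eq_self gQ x, hgQeq]
      have h4 : |((((k + 1) : ℕ) : ℝ) ^ n)⁻¹| ≤ 1 := by
        rw [abs_of_nonneg (by positivity)]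
        exact inv_le_one_of_one_le₀ (one_le_pow₀ hc1)
      calc ∫ v in V, gQ (x + (((k + 1) : ℕ) : ℝ) • v)
          ≤ ∫ v, gQ (x + (((k + 1) : ℕ) : ℝ) • v) := h1
        _ = |((((k + 1) : ℕ) : ℝ) ^ n)⁻¹| * I := by rw [h2, h3]
        _ ≤ 1 * I := mul_le_mul_of_nonneg_right h4 hInonneg
        _ = I := one_mul I
    set Gs : EuclideanSpace ℝ (Fin n) → ℝ :=
      fun v => ∑ k ∈ range m, (m.choose (k + 1) : ℝ) * gQ (x + (((k + 1) : ℕ) : ℝ) • v) with hGsdef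
    have hGsum : Integrable Gs := integrable_finset_sum _ (fun k _ => (hGint k).const_mul _)
    have hVlt : volume V < ⊤ := lt_top_iff_ne_top.2 hVfin
    have hconst : IntegrableOn (fun _ : EuclideanSpace ℝ (Fin n) => K * δ ^ m + 2 ^ m * (s / 2)) V volume :=
      integrableOn_const hVlt.ne
    have hconst2 : IntegrableOn (fun _ : EuclideanSpace ℝ (Fin n) => ‖H x‖) V volume :=
      integrableOn_const hVlt.ne
    have hRHSint : IntegrableOn
        (fun v => K * δ ^ m + 2 ^ m * (s / 2) + 1 / (2 * s) * Gs v) V volume :=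
      hconst.add ((hGsum.const_mul _).integrableOn)
    have hmono : ∫ _ in V, ‖H x‖ ≤ ∫ v in V, (K * δ ^ m + 2 ^ m * (s / 2) + 1 / (2 * s) * Gs v) :=
      setIntegral_mono_on hconst2 hRHSint hVm (fun v hv => hpoint v hv)
    rw [setIntegral_const, measureReal_def, hVtoReal, smul_eq_mul] at hmono
    have hsplitint : ∫ v in V, (K * δ ^ m + 2 ^ m * (s / 2) + 1 / (2 * s) * Gs v)
        = (K * δ ^ m + 2 ^ m * (s / 2)) * δ ^ n + 1 / (2 * s) * ∫ v in V, Gs v := by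
      rw [integral_add hconst ((hGsum.const_mul _).integrableOn), setIntegral_const, measureReal_def, hVtoReal,
        smul_eq_mul, integral_const_mul]
      ring
    have hGsle : ∫ v in V, Gs v ≤ 2 ^ m * I := by
      have h1 : ∫ v in V, Gs v
          = ∑ k ∈ range m, (m.choose (k + 1) : ℝ) * ∫ v in V, gQ (x + (((k + 1) : ℕ) : ℝ) • v) := by
        rw [hGsdef]
        rw [integral_finset_sum _ (fun k _ => ((hGint k).const_mul _).integrableOn)]
        exact Finset.sum_congr rfl fun k _ => integral_const_mul _ _
      rw [h1]
      calc ∑ k ∈ range m, (m.choose (k + 1) : ℝ) * ∫ v in V, gQ (x + (((k + 1) : ℕ) : ℝ) • v)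
          ≤ ∑ k ∈ range m, (m.choose (k + 1) : ℝ) * I :=
            Finset.sum_le_sum fun k _ => mul_le_mul_of_nonneg_left (hGle k) (Nat.cast_nonneg _)
        _ = (∑ k ∈ range m, (m.choose (k + 1) : ℝ)) * I := by rw [Finset.sum_mul]
        _ ≤ 2 ^ m * I := mul_le_mul_of_nonneg_right hchoose hInonneg
    have h2s : (0 : ℝ) ≤ 1 / (2 * s) := by positivity
    calc ‖H x‖ * δ ^ n = δ ^ n * ‖H x‖ := by ring
      _ ≤ (K * δ ^ m + 2 ^ m * (s / 2)) * δ ^ n + 1 / (2 * s) * ∫ v in V, Gs v := by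
          rw [← hsplitint]; exact hmono
      _ ≤ (K * δ ^ m + 2 ^ m * (s / 2)) * δ ^ n + 1 / (2 * s) * (2 ^ m * I) := by
          have := mul_le_mul_of_nonneg_left hGsle h2s
          linarith
  -- conclude from the key estimate
  have hnR : (0 : ℝ) < n := by exact_mod_cast hn
  have hd : (0 : ℝ) < 2 * (m : ℝ) + (n : ℝ) := by linarith
  by_cases hI0 : I = 0
  · have hstep : ∀ δ : ℝ, 0 < δ → (m : ℝ) * δ ≤ 2 → ‖H x‖ ≤ K * δ ^ m := by
      intro δ hδ hmδ
      have h4 : ∀ ε : ℝ, 0 < ε → ‖H x‖ ≤ K * δ ^ m + ε := by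
        intro ε hε
        have hδn : (0 : ℝ) < δ ^ n := pow_pos hδ n
        have hs := key0 δ hδ hmδ (2 * ε / 2 ^ m) (by positivity)
        rw [hI0] at hs
        have hsv : (2 : ℝ) ^ m * (2 * ε / 2 ^ m / 2) = ε := by field_simp
        have hs' : ‖H x‖ * δ ^ n ≤ (K * δ ^ m + ε) * δ ^ n := by
          calc ‖H x‖ * δ ^ n
              ≤ (K * δ ^ m + 2 ^ m * (2 * ε / 2 ^ m / 2)) * δ ^ n
                + 1 / (2 * (2 * ε / 2 ^ m)) * (2 ^ m * 0) := hs
            _ = (K * δ ^ m + ε) * δ ^ n := by rw [hsv]; ring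
        have := le_of_mul_le_mul_right hs' hδn
        linarith
      by_contra hcon
      push_neg at hcon
      have := h4 ((‖H x‖ - K * δ ^ m) / 2) (by linarith)
      linarith
    have hzero : ‖H x‖ ≤ 0 := by
      by_contra hcon
      push_neg at hcon
      set δ0 : ℝ := min (min 1 (2 / (m : ℝ))) (‖H x‖ / (2 * (K + 1))) with hδ0def
      have hδ0 : 0 < δ0 := lt_min (lt_min one_pos (by positivity)) (by positivity)
      have hδ1 : δ0 ≤ 1 := le_trans (min_le_left _ _) (min_le_left _ _)
      have hδ2m : (m : ℝ) * δ0 ≤ 2 := by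
        have h1 : δ0 ≤ 2 / (m : ℝ) := le_trans (min_le_left _ _) (min_le_right _ _)
        have h2 : (m : ℝ) * (2 / (m : ℝ)) = 2 := by field_simp
        have h3 := mul_le_mul_of_nonneg_left h1 hmR.le
        linarith
      have h5 := hstep δ0 hδ0 hδ2m
      have h6 : δ0 ^ m ≤ δ0 := pow_le_of_le_one hδ0.le hδ1 (by omega)
      have h7 : δ0 ≤ ‖H x‖ / (2 * (K + 1)) := min_le_right _ _
      have h7' : δ0 * (2 * (K + 1)) ≤ ‖H x‖ := by
        have := mul_le_mul_of_nonneg_left h7 (by positivity : (0:ℝ) ≤ 2 * (K + 1))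
        have h8 : 2 * (K + 1) * (‖H x‖ / (2 * (K + 1))) = ‖H x‖ := by field_simp
        linarith
      nlinarith [h5, h6, h7', hK, hδ0, mul_le_mul_of_nonneg_left h6 hK]
    rw [hI0, Real.zero_rpow (ne_of_gt (div_pos hmR hd)), mul_zero]
    exact hzero
  · have hIpos : 0 < I := lt_of_le_of_ne hInonneg (Ne.symm hI0)
    set d : ℝ := 2 * (m : ℝ) + (n : ℝ) with hd_def
    set P : ℝ := I ^ ((m : ℝ) / d) with hPdef
    have hPpos : 0 < P := Real.rpow_pos_of_pos hIpos _
    set r : ℝ := I ^ ((1 : ℝ) / d) with hrdef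
    have hr : 0 < r := Real.rpow_pos_of_pos hIpos _
    have hrm : r ^ m = P := by
      rw [hrdef, hPdef, ← Real.rpow_natCast (I ^ ((1 : ℝ) / d)) m, ← Real.rpow_mul hIpos.le]
      congr 1
      field_simp
    have hrn : r ^ n = I ^ ((n : ℝ) / d) := by
      rw [hrdef, ← Real.rpow_natCast (I ^ ((1 : ℝ) / d)) n, ← Real.rpow_mul hIpos.le]
      congr 1
      field_simp
    have hPrn : P ^ 2 * r ^ n = I := by
      rw [hPdef, hrn, ← Real.rpow_natCast (I ^ ((m : ℝ) / d)) 2, ← Real.rpow_mul hIpos.le,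
        ← Real.rpow_add hIpos,
        show (m : ℝ) / d * ((2 : ℕ) : ℝ) + (n : ℝ) / d = 1 from by
          rw [hd_def]; push_cast; field_simp]
      exact Real.rpow_one I
    by_cases hcase : (m : ℝ) * r ≤ 2
    · have hkey := key0 r hr hcase P hPpos
      have heq : 1 / (2 * P) * (2 ^ m * I) = 2 ^ m * (P / 2) * r ^ n := by
        rw [← hPrn]; field_simp
      have h8 : ‖H x‖ * r ^ n ≤ (K + 2 ^ m) * P * r ^ n := by
        rw [hrm] at hkey
        calc ‖H x‖ * r ^ n ≤ (K * P + 2 ^ m * (P / 2)) * r ^ n + 1 / (2 * P) * (2 ^ m * I) := hkey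
          _ = (K + 2 ^ m) * P * r ^ n := by rw [heq]; ring
      have h9 : ‖H x‖ ≤ (K + 2 ^ m) * P := le_of_mul_le_mul_right h8 (pow_pos hr n)
      have h10 : 0 ≤ M0 * ((m : ℝ) / 2) ^ m * P := by positivity
      nlinarith [h9, h10]
    · push_neg at hcase
      have h2r : 2 / (m : ℝ) < r := by
        have h2 : (m : ℝ) * (2 / (m : ℝ)) = 2 := by field_simp
        by_contra hcon
        push_neg at hcon
        have := mul_le_mul_of_nonneg_left hcon hmR.le
        linarith
      have hPge : (2 / (m : ℝ)) ^ m < P := by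
        rw [← hrm]
        exact pow_lt_pow_left₀ h2r (by positivity) (by omega)
      have hone : ((m : ℝ) / 2) ^ m * (2 / (m : ℝ)) ^ m = 1 := by
        rw [← mul_pow, show (m : ℝ) / 2 * (2 / (m : ℝ)) = 1 from by field_simp]
        simp
      have hfin : ‖H x‖ ≤ M0 * ((m : ℝ) / 2) ^ m * P := by
        calc ‖H x‖ ≤ M0 := hbdd x
          _ = M0 * (((m : ℝ) / 2) ^ m * (2 / (m : ℝ)) ^ m) := by rw [hone, mul_one]
          _ ≤ M0 * (((m : ℝ) / 2) ^ m * P) := by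
              refine mul_le_mul_of_nonneg_left ?_ hM0
              exact mul_le_mul_of_nonneg_left hPge.le (by positivity)
          _ = M0 * ((m : ℝ) / 2) ^ m * P := by ring
      nlinarith [hfin, hPpos, hK, h2m]
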